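/- Let n > 1 be a non-prime integer whose smallest prime factor is at most the number of its distinct prime factors. Then no clique of G_{ℤ/nℤ} dominates G_{ℤ/nℤ}; i.e., the clique domination number of G_{ℤ/nℤ} does not exist. -/

import Mathlib

/-- The unitary Cayley graph of a commutative ring: `a` is adjacent to `b`
iff `a ≠ b` and `a - b` is a unit. -/
def unitaryCayley (X : Type*) [CommRing X] : SimpleGraph X where
  Adj a b := a ≠ b ∧ IsUnit (a - b)
  symm := by
    constructor
    rintro a b ⟨h1, h2⟩
    exact ⟨h1.symm, neg_sub a b ▸ h2.neg⟩
  loopless := by constructor; rintro a ⟨h, _⟩; exact h rfl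

/-- A set of vertices dominates a graph if every vertex is in the set or
adjacent to a member of the set. -/
def Dominates {V : Type*} (G : SimpleGraph V) (s : Finset V) : Prop :=
  ∀ v, v ∈ s ∨ ∃ w ∈ s, G.Adj v w

lemma nonunit_of_cast_zero (n q : ℕ) (hq : q.Prime) (hqn : q ∣ n) (x : ZMod n)
    (hx : (ZMod.castHom hqn (ZMod q)) x = 0) : ¬ IsUnit x := by
  intro hu
  haveI : Fact q.Prime := ⟨hq⟩
  have := hu.map (ZMod.castHom hqn (ZMod q))
  rw [hx] at this
  exact not_isUnit_zero this

theorem unitaryCayley_no_dominating_clique (n : ℕ) (hn : 1 < n) (hnp : ¬ n.Prime)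
    (h : n.minFac ≤ n.primeFactors.card) :
    ∀ s : Finset (ZMod n), (unitaryCayley (ZMod n)).IsClique (s : Set (ZMod n)) →
      ¬ Dominates (unitaryCayley (ZMod n)) s := by
  classical
  haveI : NeZero n := ⟨by omega⟩
  intro s hclique hdom
  have hpm : n.minFac.Prime := Nat.minFac_prime (by omega)
  haveI : Fact n.minFac.Prime := ⟨hpm⟩
  -- clique card bound
  have hinj : Set.InjOn (ZMod.castHom n.minFac_dvd (ZMod n.minFac)) ↑s := by
    intro a ha b hb hab
    by_contra hne
    have hu := (hclique ha hb hne).2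
    have := hu.map (ZMod.castHom n.minFac_dvd (ZMod n.minFac))
    rw [map_sub, hab, sub_self] at this
    exact not_isUnit_zero this
  have hcard1 : s.card ≤ n.minFac := by
    calc s.card = (s.image (ZMod.castHom n.minFac_dvd (ZMod n.minFac))).card :=
          (Finset.card_image_of_injOn hinj).symm
      _ ≤ Fintype.card (ZMod n.minFac) := Finset.card_le_univ _
      _ = n.minFac := ZMod.card _
  have hcard : s.card ≤ n.primeFactors.card := hcard1.trans h
  by_cases hs1 : s.card ≤ 1
  · -- small clique case
    rcases s.eq_empty_or_nonempty with rfl | ⟨w, hw⟩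
    · rcases hdom 0 with h0 | ⟨u, hu, _⟩ <;> simp_all
    · have hall : ∀ a ∈ s, a = w := fun a ha => Finset.card_le_one.mp hs1 a ha w hw
      have hplt : n.minFac < n :=
        lt_of_le_of_ne (Nat.le_of_dvd (by omega) n.minFac_dvd)
          (fun he => hnp (he ▸ hpm))
      have hp0 : ((n.minFac : ZMod n)) ≠ 0 := by
        rw [Ne, ZMod.natCast_eq_zero_iff]
        intro hd
        have := Nat.le_of_dvd hpm.pos hd
        omega
      have hpu : ¬ IsUnit ((n.minFac : ZMod n)) := by
        apply nonunit_of_cast_zero n n.minFac hpm n.minFac_dvd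
        rw [map_natCast, ZMod.natCast_self]
      rcases hdom (w + n.minFac) with hv | ⟨u, hu, hadj⟩
      · have h' := hall _ hv
        rw [add_eq_left] at h'
        exact hp0 h'
      · have h' := hall u hu
        subst h'
        have := hadj.2
        rw [add_sub_cancel_left] at this
        exact hpu this
  · push_neg at hs1
    -- assign distinct primes
    set g : ZMod n → ℕ := fun w =>
      if hw : w ∈ s then
        ((n.primeFactors.equivFin.symm (Fin.castLE hcard (s.equivFin ⟨w, hw⟩))) : ℕ)
      else 1 with hg
    have hgmem : ∀ w ∈ s, g w ∈ n.primeFactors := by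
      intro w hw
      simp only [hg, dif_pos hw]
      exact (n.primeFactors.equivFin.symm _).2
    have hgprime : ∀ w ∈ s, (g w).Prime := fun w hw =>
      Nat.prime_of_mem_primeFactors (hgmem w hw)
    have hgdvd : ∀ w ∈ s, g w ∣ n := fun w hw =>
      Nat.dvd_of_mem_primeFactors (hgmem w hw)
    have hginj : ∀ w₁ ∈ s, ∀ w₂ ∈ s, g w₁ = g w₂ → w₁ = w₂ := by
      intro w₁ h₁ w₂ h₂ he
      simp only [hg, dif_pos h₁, dif_pos h₂] at he
      have := Subtype.ext he
      have := n.primeFactors.equivFin.symm.injective this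
      have := Fin.castLE_injective hcard this
      have := s.equivFin.injective this
      exact Subtype.ext_iff.mp this
    have pp : Set.Pairwise ↑s (Function.onFun Nat.Coprime g) := by
      intro a ha b hb hne
      exact (Nat.coprime_primes (hgprime a ha) (hgprime b hb)).2
        (fun he => hne (hginj a ha b hb he))
    obtain ⟨V, hV⟩ := Nat.chineseRemainderOfFinset (fun w => ZMod.val w) g s
      (fun i hi => (hgprime i hi).pos.ne') pp
    set v : ZMod n := (V : ZMod n) with hv
    have hnonunit : ∀ w ∈ s, ¬ IsUnit (v - w) := by
      intro w hw
      apply nonunit_of_cast_zero n (g w) (hgprime w hw) (hgdvd w hw)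
      have h1 : ((V : ZMod (g w))) = ((ZMod.val w : ℕ) : ZMod (g w)) :=
        (ZMod.natCast_eq_natCast_iff _ _ _).2 (hV w hw)
      rw [map_sub, hv, map_natCast, ZMod.castHom_apply, ← ZMod.natCast_val, h1, sub_self]
    rcases hdom v with hvs | ⟨w, hw, hadj⟩
    · have hall : ∀ w ∈ s, w = v := by
        intro w hw
        by_contra hne
        exact hnonunit w hw (hclique hvs hw (Ne.symm hne)).2
      have hsub : s ⊆ {v} := fun w hw => Finset.mem_singleton.2 (hall w hw)
      have := Finset.card_le_card hsub
      simp only [Finset.card_singleton] at this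
      omega
    · exact hnonunit w hw hadj.2
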